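/- arXiv:1907.10010 — 3 statements merged into one kernel-verified Lean document; each statement's English description precedes it below -/
import Mathlib

section
/- Let ω ∈ ℂ be a primitive k-th root of unity with k ≥ 2, let n ≥ 1, and let D = diag(1, ω, ..., ω^{n-1}) ∈ M_n(ℂ). Suppose there exist matrices x_0, ..., x_d ∈ M_n(ℂ) such that each x_j is normal, D x_j D^{-1} = ω x_j for all j, and Σ_{j=0}^d x_j x_j^* = 1. Then k divides n. -/
open Finset Matrix

lemma myPowEqPowMod {k : ℕ} {ω : ℂ} (hω : IsPrimitiveRoot ω k) (hk : k ≠ 0)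
    {a b : ℕ} (h : ω ^ a = ω ^ b) : a % k = b % k := by
  have hω0 : ω ≠ 0 := hω.ne_zero hk
  wlog hba : b ≤ a generalizing a b
  · exact (this h.symm (le_of_not_ge hba)).symm
  have h1 : ω ^ b * ω ^ (a - b) = ω ^ b * 1 := by
    rw [mul_one, ← pow_add, Nat.add_sub_cancel' hba]
    exact h
  have h2 : ω ^ (a - b) = 1 := mul_left_cancel₀ (pow_ne_zero _ hω0) h1
  have h3 : k ∣ a - b := hω.dvd_of_pow_eq_one _ h2
  exact ((Nat.modEq_iff_dvd' hba).mpr h3).symm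

theorem dvd_of_normal_spectral_partition
    (k n d : ℕ) (hk : 2 ≤ k) (hn : 1 ≤ n) (ω : ℂ) (hω : IsPrimitiveRoot ω k)
    (D : Matrix (Fin n) (Fin n) ℂ) (hD : D = Matrix.diagonal fun i : Fin n => ω ^ (i : ℕ))
    (x : Fin (d + 1) → Matrix (Fin n) (Fin n) ℂ)
    (hnormal : ∀ j, x j * star (x j) = star (x j) * x j)
    (hdeg : ∀ j, D * x j * D⁻¹ = ω • x j)
    (hsum : ∑ j, x j * star (x j) = 1) :
    k ∣ n := by
  have hk0 : k ≠ 0 := by omega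
  have hω0 : ω ≠ 0 := hω.ne_zero hk0
  -- entries vanish off the shifted diagonal blocks
  have hvan : ∀ j (r c : Fin n), (r : ℕ) % k ≠ ((c : ℕ) + 1) % k → x j r c = 0 := by
    intro j r c hrc
    by_contra hx
    have hDinv : D⁻¹ = Matrix.diagonal fun i : Fin n => (ω ^ (i : ℕ))⁻¹ := by
      apply Matrix.inv_eq_right_inv
      rw [hD, Matrix.diagonal_mul_diagonal]
      convert Matrix.diagonal_one using 2
      funext i
      exact mul_inv_cancel₀ (pow_ne_zero _ hω0)
    have he := congrFun (congrFun (hdeg j) r) c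
    rw [hDinv, hD] at he
    rw [Matrix.mul_diagonal, Matrix.diagonal_mul, Matrix.smul_apply, smul_eq_mul] at he
    have he2 : ω ^ (r : ℕ) * x j r c = ω ^ ((c : ℕ) + 1) * x j r c := by
      field_simp at he
      rw [pow_succ']
      linear_combination (x j r c) * he
    exact hrc (myPowEqPowMod hω hk0 (mul_right_cancel₀ hx he2))
  -- residue class filters
  set F : ℕ → Finset (Fin n) := fun m => univ.filter (fun i : Fin n => (i : ℕ) % k = m) with hF
  -- key trace identity
  have key : ∀ (j : Fin (d + 1)) (m : ℕ), m < k →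
      ∑ c ∈ F m, (star (x j) * x j) c c = ∑ r ∈ F ((m + 1) % k), (x j * star (x j)) r r := by
    intro j m hm
    have hL : ∑ c ∈ F m, (star (x j) * x j) c c
        = ∑ c ∈ F m, ∑ r ∈ F ((m + 1) % k), x j r c * star (x j r c) := by
      refine Finset.sum_congr rfl fun c hc => ?_
      have hcm : (c : ℕ) % k = m := by simpa [hF] using hc
      rw [Matrix.mul_apply]
      rw [show ∑ r : Fin n, star (x j) c r * x j r c
          = ∑ r : Fin n, x j r c * star (x j r c) by
        refine Finset.sum_congr rfl fun r _ => ?_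
        rw [Matrix.star_apply, mul_comm]]
      refine (Finset.sum_filter_of_ne fun r _ hne => ?_).symm
      have hx : x j r c ≠ 0 := fun h0 => hne (by simp [h0])
      have hr : (r : ℕ) % k = ((c : ℕ) + 1) % k := by
        by_contra hcon
        exact hx (hvan j r c hcon)
      rw [hr]
      have hcmod : (c : ℕ) ≡ m [MOD k] := by
        show (c : ℕ) % k = m % k
        rw [hcm, Nat.mod_eq_of_lt hm]
      exact hcmod.add_right 1
    have hR : ∑ r ∈ F ((m + 1) % k), (x j * star (x j)) r r
        = ∑ r ∈ F ((m + 1) % k), ∑ c ∈ F m, x j r c * star (x j r c) := by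
      refine Finset.sum_congr rfl fun r hrmem => ?_
      have hrm : (r : ℕ) % k = (m + 1) % k := by simpa [hF] using hrmem
      rw [Matrix.mul_apply]
      simp only [Matrix.star_apply]
      refine (Finset.sum_filter_of_ne fun c _ hne => ?_).symm
      have hx : x j r c ≠ 0 := fun h0 => hne (by simp [h0])
      have hrc : (r : ℕ) % k = ((c : ℕ) + 1) % k := by
        by_contra hcon
        exact hx (hvan j r c hcon)
      have hcc : (c : ℕ) + 1 ≡ m + 1 [MOD k] := by
        show ((c : ℕ) + 1) % k = (m + 1) % k
        rw [← hrc, hrm]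
      have := Nat.ModEq.add_right_cancel' 1 hcc
      show (c : ℕ) % k = m
      rw [this, Nat.mod_eq_of_lt hm]
    rw [hL, hR, Finset.sum_comm]
  have hcard : ∀ m : ℕ, ∑ j, ∑ c ∈ F m, (x j * star (x j)) c c = ((F m).card : ℂ) := by
    intro m
    rw [Finset.sum_comm]
    have h1 : ∀ c ∈ F m, ∑ j, (x j * star (x j)) c c = 1 := by
      intro c _
      rw [← Matrix.sum_apply, hsum]
      exact Matrix.one_apply_eq c
    rw [Finset.sum_congr rfl h1, Finset.sum_const, nsmul_eq_mul, mul_one]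
  have hstep : ∀ m : ℕ, m < k → (F m).card = (F ((m + 1) % k)).card := by
    intro m hm
    have hC : ((F m).card : ℂ) = ((F ((m + 1) % k)).card : ℂ) := by
      rw [← hcard m, ← hcard ((m + 1) % k)]
      refine Finset.sum_congr rfl fun j _ => ?_
      calc ∑ c ∈ F m, (x j * star (x j)) c c
          = ∑ c ∈ F m, (star (x j) * x j) c c := by rw [hnormal j]
        _ = ∑ r ∈ F ((m + 1) % k), (x j * star (x j)) r r := key j m hm
    exact Nat.cast_injective hC
  have hall : ∀ m : ℕ, m < k → (F m).card = (F 0).card := by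
    intro m
    induction m with
    | zero => intro _; rfl
    | succ m ih =>
      intro hm
      have hm' : m < k := Nat.lt_of_succ_lt hm
      have h1 := hstep m hm'
      rw [Nat.mod_eq_of_lt hm] at h1
      rw [← h1]; exact ih hm'
  have hpart : ∑ m ∈ Finset.range k, (F m).card = n := by
    have h2 := Finset.card_eq_sum_card_fiberwise
      (s := (univ : Finset (Fin n))) (t := Finset.range k) (f := fun i : Fin n => (i : ℕ) % k)
      (fun i _ => Finset.mem_range.mpr (Nat.mod_lt _ (by omega)))
    rw [Finset.card_univ, Fintype.card_fin] at h2
    exact h2.symm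
  refine ⟨(F 0).card, ?_⟩
  calc n = ∑ m ∈ Finset.range k, (F m).card := hpart.symm
    _ = ∑ _m ∈ Finset.range k, (F 0).card :=
        Finset.sum_congr rfl (fun m hm => hall m (Finset.mem_range.mp hm))
    _ = k * (F 0).card := by rw [Finset.sum_const, Finset.card_range, smul_eq_mul]
end

section
/- Let u be a unitary in M_n(ℂ) with u^k = 1, let ω be a primitive k-th root of unity, and let V_i = ker(u - ω^i·1) for i ∈ ℤ/k. Suppose x_0, ..., x_d ∈ M_n(ℂ) satisfy u x_j u^* = ω x_j for all j and Σ_{j=0}^d x_j x_j^* = 1 = Σ_{j=0}^d x_j^* x_j. Then dim V_i = dim V_{i+1} for all i ∈ ℤ/k; i.e., all eigenspaces of u have the same dimension, and in particular k divides n. -/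
theorem eigenspaces_equidimensional_of_unit_sum
    (k n d : ℕ) (hk : 2 ≤ k) (hn : 1 ≤ n) (ω : ℂ) (hω : IsPrimitiveRoot ω k)
    (u : Matrix (Fin n) (Fin n) ℂ) (hu : star u * u = 1) (huk : u ^ k = 1)
    (V : ℕ → Submodule ℂ (Fin n → ℂ))
    (hV : ∀ i, V i = LinearMap.ker (Matrix.toLin' (u - ω ^ i • (1 : Matrix (Fin n) (Fin n) ℂ))))
    (x : Fin (d + 1) → Matrix (Fin n) (Fin n) ℂ)
    (hdeg : ∀ j, u * x j * star u = ω • x j)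
    (hsum : ∑ j, x j * star (x j) = 1)
    (hsum' : ∑ j, star (x j) * x j = 1) :
    (∀ i : ℕ, Module.finrank ℂ (V i) = Module.finrank ℂ (V (i + 1))) ∧ k ∣ n := by
  classical
  have hkpos : 0 < k := by omega
  have hk0 : (k : ℂ) ≠ 0 := Nat.cast_ne_zero.mpr (by omega)
  have hωk : ω ^ k = 1 := hω.pow_eq_one
  have hω0 : ω ≠ 0 := hω.ne_zero (by omega)
  set c : ℕ → ℂ := fun i => (ω ^ i)⁻¹ with hc
  have hcω : ∀ i, c i * ω ^ i = 1 := fun i => inv_mul_cancel₀ (pow_ne_zero _ hω0)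
  have hωc : ∀ i, ω ^ i * c i = 1 := fun i => mul_inv_cancel₀ (pow_ne_zero _ hω0)
  set S : ℕ → Matrix (Fin n) (Fin n) ℂ := fun i =>
    ∑ m ∈ Finset.range k, (c i) ^ m • u ^ m with hSdef
  set P : ℕ → Matrix (Fin n) (Fin n) ℂ := fun i => (k : ℂ)⁻¹ • S i with hPdef
  -- u * x j = ω • (x j * u)
  have hux : ∀ j, u * x j = ω • (x j * u) := by
    intro j
    calc u * x j = (u * x j * star u) * u := by rw [mul_assoc, hu, mul_one]
    _ = (ω • x j) * u := by rw [hdeg j]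
    _ = ω • (x j * u) := smul_mul_assoc ω (x j) u
  have humx : ∀ m j, u ^ m * x j = ω ^ m • (x j * u ^ m) := by
    intro m j
    induction m with
    | zero => simp
    | succ m ih =>
      calc u ^ (m + 1) * x j = u * (u ^ m * x j) := by rw [pow_succ', mul_assoc]
      _ = u * (ω ^ m • (x j * u ^ m)) := by rw [ih]
      _ = ω ^ m • (u * x j * u ^ m) := by rw [mul_smul_comm, mul_assoc]
      _ = ω ^ m • ((ω • (x j * u)) * u ^ m) := by rw [hux j]
      _ = ω ^ (m + 1) • (x j * u ^ (m + 1)) := by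
          rw [smul_mul_assoc, smul_smul, mul_assoc, ← pow_succ', ← pow_succ]
  -- key shift identity
  have hS : ∀ i, ∑ m ∈ Finset.range k, (c i) ^ m • u ^ (m + 1) = ω ^ i • S i := by
    intro i
    rw [hSdef]
    obtain ⟨K, rfl⟩ : ∃ K, k = K + 1 := ⟨k - 1, by omega⟩
    rw [Finset.smul_sum, Finset.sum_range_succ]
    conv_rhs => rw [Finset.sum_range_succ']
    congr 1
    · apply Finset.sum_congr rfl
      intro m _
      rw [smul_smul]
      congr 1
      calc (c i) ^ m = (ω ^ i * c i) * (c i) ^ m := by rw [hωc i, one_mul]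
      _ = ω ^ i * (c i) ^ (m + 1) := by ring
    · rw [huk, pow_zero, pow_zero, smul_smul, mul_one]
      congr 1
      have h2 : (ω ^ i) ^ (K + 1) = 1 := by
        rw [← pow_mul, mul_comm, pow_mul, hωk, one_pow]
      calc (c i) ^ K = (c i) ^ K * ((ω ^ i) ^ K * ω ^ i) := by rw [← pow_succ, h2, mul_one]
      _ = (((c i) * (ω ^ i)) ^ K) * ω ^ i := by rw [mul_pow]; ring
      _ = ω ^ i := by rw [hcω i, one_pow, one_mul]
  have hSu : ∀ i, u * S i = ω ^ i • S i := by
    intro i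
    calc u * S i = ∑ m ∈ Finset.range k, u * ((c i) ^ m • u ^ m) := Finset.mul_sum _ _ _
    _ = ∑ m ∈ Finset.range k, (c i) ^ m • u ^ (m + 1) := by
        apply Finset.sum_congr rfl; intro m _; rw [mul_smul_comm, ← pow_succ']
    _ = ω ^ i • S i := hS i
  have hSu' : ∀ i, S i * u = ω ^ i • S i := by
    intro i
    calc S i * u = ∑ m ∈ Finset.range k, ((c i) ^ m • u ^ m) * u := Finset.sum_mul _ _ _
    _ = ∑ m ∈ Finset.range k, (c i) ^ m • u ^ (m + 1) := by
        apply Finset.sum_congr rfl; intro m _; rw [smul_mul_assoc, ← pow_succ]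
    _ = ω ^ i • S i := hS i
  have hPu : ∀ i, u * P i = ω ^ i • P i := by
    intro i
    rw [hPdef]
    simp only [mul_smul_comm, hSu i, smul_comm ((k:ℂ)⁻¹)]
  -- P (i+1) * x j = x j * P i
  have hSx : ∀ i j, S (i + 1) * x j = x j * S i := by
    intro i j
    have hcc : c (i + 1) * ω = c i := by
      rw [hc]
      simp only []
      rw [pow_succ, mul_inv, mul_assoc, inv_mul_cancel₀ hω0, mul_one]
    calc S (i + 1) * x j = ∑ m ∈ Finset.range k, ((c (i+1)) ^ m • u ^ m) * x j :=
          Finset.sum_mul _ _ _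
    _ = ∑ m ∈ Finset.range k, (c i) ^ m • (x j * u ^ m) := by
        apply Finset.sum_congr rfl
        intro m _
        rw [smul_mul_assoc, humx m j, smul_smul, ← mul_pow, hcc]
    _ = ∑ m ∈ Finset.range k, x j * ((c i) ^ m • u ^ m) := by
        apply Finset.sum_congr rfl; intro m _; rw [mul_smul_comm]
    _ = x j * S i := (Finset.mul_sum _ _ _).symm
  have hPx : ∀ i j, P (i + 1) * x j = x j * P i := by
    intro i j
    rw [hPdef]
    simp only [smul_mul_assoc, mul_smul_comm, hSx i j]
  -- traces are equal
  have htr : ∀ i, (P (i + 1)).trace = (P i).trace := by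
    intro i
    calc (P (i + 1)).trace = (P (i + 1) * 1).trace := by rw [mul_one]
    _ = (P (i + 1) * ∑ j, x j * star (x j)).trace := by rw [hsum]
    _ = (∑ j, P (i + 1) * (x j * star (x j))).trace := by rw [Finset.mul_sum]
    _ = ∑ j, (P (i + 1) * x j * star (x j)).trace := by
        rw [Matrix.trace_sum]; exact Finset.sum_congr rfl fun j _ => by rw [mul_assoc]
    _ = ∑ j, (x j * P i * star (x j)).trace := by
        exact Finset.sum_congr rfl fun j _ => by rw [hPx i j]
    _ = ∑ j, (star (x j) * (x j * P i)).trace := by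
        exact Finset.sum_congr rfl fun j _ => by rw [Matrix.trace_mul_comm]
    _ = ∑ j, (star (x j) * x j * P i).trace := by
        exact Finset.sum_congr rfl fun j _ => by rw [mul_assoc]
    _ = ((∑ j, star (x j) * x j) * P i).trace := by rw [Finset.sum_mul, Matrix.trace_sum]
    _ = (P i).trace := by rw [hsum', one_mul]
  -- toLin' (P i) is a projection onto V i
  have hproj : ∀ i, LinearMap.IsProj (V i) (Matrix.toLin' (P i)) := by
    intro i
    constructor
    · intro v
      rw [hV i, LinearMap.mem_ker, ← Matrix.toLin'_mul_apply]
      have h0 : (u - ω ^ i • 1) * P i = 0 := by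
        rw [sub_mul, hPu i, smul_mul_assoc, one_mul, sub_self]
      rw [h0]
      simp
    · intro v hv
      rw [hV i, LinearMap.mem_ker] at hv
      have huv : Matrix.toLin' u v = ω ^ i • v := by
        rw [map_sub] at hv
        have h1 : Matrix.toLin' (ω ^ i • (1 : Matrix (Fin n) (Fin n) ℂ)) v = ω ^ i • v := by
          rw [map_smul]
          simp [Matrix.toLin'_one]
        rw [LinearMap.sub_apply, h1, sub_eq_zero] at hv
        exact hv
      have hpow : ∀ m, Matrix.toLin' (u ^ m) v = (ω ^ i) ^ m • v := by
        intro m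
        induction m with
        | zero => simp
        | succ m ih =>
          rw [pow_succ', Matrix.toLin'_mul_apply, ih, map_smul, huv, smul_smul, ← pow_succ]
      have hSv : Matrix.toLin' (S i) v = (k : ℂ) • v := by
        rw [hSdef]
        rw [map_sum, LinearMap.sum_apply]
        have he : ∀ m ∈ Finset.range k, (Matrix.toLin' ((c i) ^ m • u ^ m)) v = v := by
          intro m _
          rw [map_smul, LinearMap.smul_apply, hpow m, smul_smul, ← mul_pow, hcω i,
            one_pow, one_smul]
        rw [Finset.sum_congr rfl he, Finset.sum_const, Finset.card_range]
        exact (Nat.cast_smul_eq_nsmul ℂ k v).symm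
      rw [hPdef]
      simp only [map_smul, LinearMap.smul_apply, hSv, smul_smul, inv_mul_cancel₀ hk0, one_smul]
  -- trace of P i = finrank V i
  have htrV : ∀ i, (P i).trace = (Module.finrank ℂ (V i) : ℂ) := by
    intro i
    have h1 : LinearMap.trace ℂ (Fin n → ℂ) (Matrix.toLin' (P i))
        = (Module.finrank ℂ (V i) : ℂ) := (hproj i).trace
    rw [← h1, LinearMap.trace_eq_matrix_trace ℂ (Pi.basisFun ℂ (Fin n)),
      LinearMap.toMatrix_eq_toMatrix', LinearMap.toMatrix'_toLin']
  -- part 1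
  have part1 : ∀ i : ℕ, Module.finrank ℂ (V i) = Module.finrank ℂ (V (i + 1)) := by
    intro i
    have : (Module.finrank ℂ (V i) : ℂ) = (Module.finrank ℂ (V (i + 1)) : ℂ) := by
      rw [← htrV, ← htrV, htr]
    exact_mod_cast this
  refine ⟨part1, ?_⟩
  have hall : ∀ i, Module.finrank ℂ (V i) = Module.finrank ℂ (V 0) := by
    intro i
    induction i with
    | zero => rfl
    | succ i ih => rw [← part1 i, ih]
  -- sum of projections is 1
  have hsumP : ∑ i ∈ Finset.range k, P i = 1 := by
    have hswap : ∑ i ∈ Finset.range k, S i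
        = ∑ m ∈ Finset.range k, (∑ i ∈ Finset.range k, (c i) ^ m) • u ^ m := by
      rw [hSdef, Finset.sum_comm]
      exact Finset.sum_congr rfl fun m _ => Finset.sum_smul.symm
    have hterm : ∀ m ∈ Finset.range k,
        (∑ i ∈ Finset.range k, (c i) ^ m) • u ^ m
          = if m = 0 then (k : ℂ) • (1 : Matrix (Fin n) (Fin n) ℂ) else 0 := by
      intro m hm
      have hci : ∀ i, (c i) ^ m = ((ω ^ m)⁻¹) ^ i := by
        intro i
        rw [hc]
        simp only [← inv_pow, ← pow_mul, mul_comm i m]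
      by_cases h0 : m = 0
      · subst h0; simp
      · rw [if_neg h0]
        have hz1 : (ω ^ m)⁻¹ ≠ 1 := by
          intro h
          have hm1 : ω ^ m = 1 := by
            have := congrArg (· * ω ^ m) h
            simpa [inv_mul_cancel₀ (pow_ne_zero m hω0)] using this.symm
          exact hω.pow_ne_one_of_pos_of_lt (by omega) (Finset.mem_range.mp hm) hm1
        have hz : ∑ i ∈ Finset.range k, ((ω ^ m)⁻¹) ^ i = 0 := by
          rw [geom_sum_eq hz1]
          have : ((ω ^ m)⁻¹) ^ k = 1 := by
            rw [inv_pow, ← pow_mul, mul_comm m k, pow_mul, hωk, one_pow, inv_one]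
          rw [this, sub_self, zero_div]
        rw [Finset.sum_congr rfl fun i _ => hci i, hz, zero_smul]
    have : ∑ i ∈ Finset.range k, S i = (k : ℂ) • (1 : Matrix (Fin n) (Fin n) ℂ) := by
      rw [hswap, Finset.sum_congr rfl hterm, Finset.sum_ite_eq' (Finset.range k) 0,
        if_pos (Finset.mem_range.mpr hkpos)]
    rw [hPdef]
    simp only [← Finset.smul_sum, this, smul_smul, inv_mul_cancel₀ hk0, one_smul]
  -- compute n = k * finrank (V 0)
  have hn' : (n : ℂ) = (k : ℂ) * (Module.finrank ℂ (V 0) : ℂ) := by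
    calc (n : ℂ) = (1 : Matrix (Fin n) (Fin n) ℂ).trace := by
          rw [Matrix.trace_one]; simp
    _ = (∑ i ∈ Finset.range k, P i).trace := by rw [hsumP]
    _ = ∑ i ∈ Finset.range k, (P i).trace := Matrix.trace_sum _ _
    _ = ∑ i ∈ Finset.range k, (Module.finrank ℂ (V i) : ℂ) :=
        Finset.sum_congr rfl fun i _ => htrV i
    _ = ∑ i ∈ Finset.range k, (Module.finrank ℂ (V 0) : ℂ) :=
        Finset.sum_congr rfl fun i _ => by rw [hall i]
    _ = (k : ℂ) * (Module.finrank ℂ (V 0) : ℂ) := by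
        rw [Finset.sum_const, Finset.card_range, nsmul_eq_mul]
  have : n = k * Module.finrank ℂ (V 0) := by exact_mod_cast hn'
  exact ⟨_, this⟩
end

section
/- Let a and b be commuting normal elements of a unital C*-algebra A. Then a^* b = b a^* (and consequently the C*-subalgebra generated by a and b is commutative). -/
open NormedSpace

theorem fuglede_putnam_commuting_normals
    {A : Type*} [NormedRing A] [StarRing A] [CStarRing A] [CompleteSpace A]
    [NormedAlgebra ℂ A] [StarModule ℂ A]
    (a b : A) (ha : IsStarNormal a) (hb : IsStarNormal b) (hab : a * b = b * a) :
    star a * b = b * star a := by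
  let +nondep : NormedAlgebra ℚ A := .restrictScalars ℚ ℂ A
  set c : A := star a with hc
  -- b commutes with exp (w • a) for any w
  have hba : Commute b a := hab.symm
  have hbexp : ∀ w : ℂ, Commute b (exp (w • a)) :=
    fun w => ((hba.smul_right w).exp_right)
  have hac : Commute a c := (ha.star_comm_self).symm
  -- key: exp (z • c) commutes with b for all z
  have key : ∀ z : ℂ, exp (z • c) * b = b * exp (z • c) := by
    have hdiff : Differentiable ℂ (fun z : ℂ => exp (z • c) * b * exp ((-z) • c)) := by
      have h1 : Differentiable ℂ (fun z : ℂ => exp (z • c)) :=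
        fun t => (hasDerivAt_exp_smul_const (𝕂 := ℂ) c t).differentiableAt
      exact ((h1.mul_const b).mul (h1.comp differentiable_neg))
    have hbound : ∀ z : ℂ,
        ‖exp (z • c) * b * exp ((-z) • c)‖ ≤ ‖b‖ := by
      intro z
      have hcomm : Commute (z • c) ((starRingEnd ℂ z) • a) :=
        (hac.symm.smul_left _).smul_right _
      -- rewrite as conjugation by a unitary
      have hrw : exp (z • c) * b * exp ((-z) • c)
          = exp (z • c - (starRingEnd ℂ z) • a) * b *
            exp ((starRingEnd ℂ z) • a - z • c) := by
        have e1 : exp (z • c - (starRingEnd ℂ z) • a)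
            = exp (z • c) * exp (-((starRingEnd ℂ z) • a)) := by
          rw [sub_eq_add_neg, exp_add_of_commute (hcomm.neg_right)]
        have e2 : exp ((starRingEnd ℂ z) • a - z • c)
            = exp ((starRingEnd ℂ z) • a) * exp ((-z) • c) := by
          rw [sub_eq_add_neg, exp_add_of_commute ((hcomm.symm).neg_right), neg_smul]
        rw [e1, e2]
        have hb1 : exp (-((starRingEnd ℂ z) • a)) * b
            = b * exp (-((starRingEnd ℂ z) • a)) := by
          simpa [neg_smul] using (hbexp (-(starRingEnd ℂ z))).symm.eq
        have hinv : exp (-((starRingEnd ℂ z) • a)) * exp ((starRingEnd ℂ z) • a) = 1 := by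
          rw [← exp_add_of_commute (Commute.refl _).neg_left, neg_add_cancel, exp_zero]
        calc exp (z • c) * b * exp ((-z) • c)
            = exp (z • c) * (b * (exp (-((starRingEnd ℂ z) • a)) *
              exp ((starRingEnd ℂ z) • a))) * exp ((-z) • c) := by rw [hinv, mul_one]
          _ = exp (z • c) * exp (-((starRingEnd ℂ z) • a)) * b *
              (exp ((starRingEnd ℂ z) • a) * exp ((-z) • c)) := by
              simp only [mul_assoc]
              rw [← mul_assoc b (exp (-((starRingEnd ℂ z) • a))), ← hb1, mul_assoc]
          _ = _ := by rw [← mul_assoc]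
      rw [hrw]
      -- the element w := z • c - conj z • a is skew-adjoint
      set w : A := z • c - (starRingEnd ℂ z) • a with hw
      have hskew : w ∈ skewAdjoint A := by
        simp only [skewAdjoint.mem_iff, hw, star_sub, star_smul, hc, star_star]
        simp [neg_sub]
      have hu : exp w ∈ unitary A := exp_mem_unitary_of_mem_skewAdjoint hskew
      have hstar : exp ((starRingEnd ℂ z) • a - z • c) = star (exp w) := by
        rw [star_exp]
        congr 1
        simp only [hw, star_sub, star_smul, hc, star_star]
        simp [Complex.star_def]
      rw [hstar, mul_assoc]
      calc ‖exp w * (b * star (exp w))‖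
          = ‖b * star (exp w)‖ := CStarRing.norm_mem_unitary_mul _ hu
        _ = ‖b‖ := CStarRing.norm_mul_mem_unitary _ (Unitary.star_mem hu)
        _ ≤ ‖b‖ := le_refl _
    -- Liouville: the function is constant
    have hconst : ∀ z : ℂ, exp (z • c) * b * exp ((-z) • c) = b := by
      intro z
      have hbdd : Bornology.IsBounded
          (Set.range fun z : ℂ => exp (z • c) * b * exp ((-z) • c)) := by
        apply Bornology.IsBounded.subset (Metric.isBounded_closedBall (x := (0 : A)) (r := ‖b‖))
        rintro x ⟨z, rfl⟩
        simpa [Metric.mem_closedBall] using hbound z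
      have := hdiff.apply_eq_apply_of_bounded hbdd z 0
      simpa using this
    intro z
    have h1 : exp ((-z) • c) * exp (z • c) = 1 := by
      rw [neg_smul, ← exp_add_of_commute (Commute.refl (z • c)).neg_left, neg_add_cancel,
        exp_zero]
    calc exp (z • c) * b
        = exp (z • c) * b * (exp ((-z) • c) * exp (z • c)) := by rw [h1, mul_one]
      _ = (exp (z • c) * b * exp ((-z) • c)) * exp (z • c) := by
          rw [← mul_assoc]
      _ = b * exp (z • c) := by rw [hconst z]
  -- differentiate at 0
  have hd1 : HasDerivAt (fun z : ℂ => exp (z • c) * b) (c * b) 0 := by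
    have := (hasDerivAt_exp_smul_const (𝕂 := ℂ) c 0).mul_const b
    simpa using this
  have hd2 : HasDerivAt (fun z : ℂ => b * exp (z • c)) (b * c) 0 := by
    have := (hasDerivAt_exp_smul_const (𝕂 := ℂ) c 0).const_mul b
    simpa using this
  have heq : (fun z : ℂ => exp (z • c) * b) = fun z : ℂ => b * exp (z • c) :=
    funext key
  rw [heq] at hd1
  exact hd1.unique hd2
end
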